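/- Let n ≥ 1 and K ≥ 1 be integers, and let γ > 0, L > 0, σ² ≥ 0, B > 0 be reals with γ ≤ 1/(4nL). Let s : ℕ → ℝ be a nonnegative sequence, let d : {1,…,n} × ℕ → ℕ satisfy d_i^k ≤ 2n and d_i^k ≤ k for all i and k, and let r : {1,…,n} × ℕ → ℝ be nonnegative numbers satisfying r_i^k ≤ 2γ² d_i^k ∑_{ℓ = k − d_i^k}^{k−1} s_ℓ + 2γ² (d_i^k)² σ²/(Bn) for all i ∈ {1,…,n} and k ∈ ℕ. Then (1/K) ∑_{k=0}^{K−1} (1/n) ∑_{i=1}^n r_i^k ≤ (2γn/(LK)) ∑_{k=0}^{K−1} s_k + 2γσ²/(LB). -/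

import Mathlib

open scoped BigOperators

lemma counting_aux (K m : ℕ) (s : ℕ → ℝ) (hs : ∀ k, 0 ≤ s k) :
    ∑ k ∈ Finset.range K, ∑ ℓ ∈ Finset.Ico (k - m) k, s ℓ
      ≤ (m : ℝ) * ∑ ℓ ∈ Finset.range K, s ℓ := by
  have h1 : ∑ k ∈ Finset.range K, ∑ ℓ ∈ Finset.Ico (k - m) k, s ℓ
      = ∑ k ∈ Finset.range K, ∑ ℓ ∈ Finset.range K,
          if k - m ≤ ℓ ∧ ℓ < k then s ℓ else 0 := by
    refine Finset.sum_congr rfl fun k hk => ?_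
    rw [Finset.mem_range] at hk
    rw [← Finset.sum_filter]
    congr 1
    ext ℓ
    simp only [Finset.mem_Ico, Finset.mem_filter, Finset.mem_range]
    omega
  rw [h1, Finset.sum_comm, Finset.mul_sum]
  refine Finset.sum_le_sum fun ℓ _ => ?_
  rw [← Finset.sum_filter, Finset.sum_const, nsmul_eq_mul]
  have hcard : ((Finset.range K).filter (fun k => k - m ≤ ℓ ∧ ℓ < k)).card ≤ m := by
    have hsub : (Finset.range K).filter (fun k => k - m ≤ ℓ ∧ ℓ < k)
        ⊆ Finset.Ico (ℓ + 1) (ℓ + m + 1) := by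
      intro x hx
      simp only [Finset.mem_filter, Finset.mem_range, Finset.mem_Ico] at hx ⊢
      omega
    calc ((Finset.range K).filter (fun k => k - m ≤ ℓ ∧ ℓ < k)).card
        ≤ (Finset.Ico (ℓ + 1) (ℓ + m + 1)).card := Finset.card_le_card hsub
      _ = m := by rw [Nat.card_Ico]; omega
  exact mul_le_mul_of_nonneg_right (by exact_mod_cast hcard) (hs ℓ)

/-- Abstract residual-estimation inequality of asynchronous SGD. -/
theorem residual_estimation
    (n K : ℕ) (hn : 1 ≤ n) (hK : 1 ≤ K)
    (γ L σ2 B : ℝ) (hγ : 0 < γ) (hL : 0 < L) (hσ : 0 ≤ σ2) (hB : 0 < B)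
    (hγle : γ ≤ 1 / (4 * n * L))
    (s : ℕ → ℝ) (hs : ∀ k, 0 ≤ s k)
    (dl : Fin n → ℕ → ℕ)
    (hdl1 : ∀ i k, dl i k ≤ 2 * n) (hdl2 : ∀ i k, dl i k ≤ k)
    (r : Fin n → ℕ → ℝ) (hr0 : ∀ i k, 0 ≤ r i k)
    (hr : ∀ (i : Fin n) (k : ℕ),
      r i k ≤ 2 * γ ^ 2 * (dl i k : ℝ) * ∑ ℓ ∈ Finset.Ico (k - dl i k) k, s ℓ
        + 2 * γ ^ 2 * (dl i k : ℝ) ^ 2 * σ2 / (B * n)) :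
    (1 / (K : ℝ)) * ∑ k ∈ Finset.range K, (1 / (n : ℝ)) * ∑ i : Fin n, r i k
      ≤ (2 * γ * n / (L * K)) * ∑ k ∈ Finset.range K, s k
        + 2 * γ * σ2 / (L * B) := by
  have hn0 : (0 : ℝ) < n := by exact_mod_cast hn
  have hK0 : (0 : ℝ) < K := by exact_mod_cast hK
  have hγL : γ * (4 * n * L) ≤ 1 := by
    have h4 : (0 : ℝ) < 4 * n * L := by positivity
    calc γ * (4 * n * L) ≤ (1 / (4 * n * L)) * (4 * n * L) :=
          mul_le_mul_of_nonneg_right hγle (le_of_lt h4)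
      _ = 1 := by field_simp
  -- key pointwise bound
  have key : ∀ (i : Fin n) (k : ℕ),
      r i k ≤ (γ / L) * ∑ ℓ ∈ Finset.Ico (k - 2 * n) k, s ℓ
        + 2 * γ * σ2 / (L * B) := by
    intro i k
    have hd := hdl1 i k
    have hdR : (dl i k : ℝ) ≤ 2 * n := by exact_mod_cast hd
    have hd0 : (0 : ℝ) ≤ (dl i k : ℝ) := Nat.cast_nonneg _
    have hsub : Finset.Ico (k - dl i k) k ⊆ Finset.Ico (k - 2 * n) k := by
      intro x hx
      simp only [Finset.mem_Ico] at hx ⊢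
      omega
    have hsum1 : ∑ ℓ ∈ Finset.Ico (k - dl i k) k, s ℓ
        ≤ ∑ ℓ ∈ Finset.Ico (k - 2 * n) k, s ℓ :=
      Finset.sum_le_sum_of_subset_of_nonneg hsub (fun j _ _ => hs j)
    have hsum0 : (0 : ℝ) ≤ ∑ ℓ ∈ Finset.Ico (k - dl i k) k, s ℓ :=
      Finset.sum_nonneg fun j _ => hs j
    have hcoef : 2 * γ ^ 2 * (dl i k : ℝ) ≤ γ / L := by
      rw [div_eq_mul_inv]
      have h1 : 2 * γ ^ 2 * (dl i k : ℝ) ≤ 4 * γ ^ 2 * n := by nlinarith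
      have h2 : 4 * γ ^ 2 * (n : ℝ) ≤ γ * L⁻¹ := by
        rw [← div_eq_mul_inv, le_div_iff₀ hL]
        nlinarith [mul_le_mul_of_nonneg_left hγL hγ.le]
      linarith
    have hterm1 : 2 * γ ^ 2 * (dl i k : ℝ) * ∑ ℓ ∈ Finset.Ico (k - dl i k) k, s ℓ
        ≤ (γ / L) * ∑ ℓ ∈ Finset.Ico (k - 2 * n) k, s ℓ := by
      have hc0 : (0 : ℝ) ≤ 2 * γ ^ 2 * (dl i k : ℝ) := by positivity
      calc 2 * γ ^ 2 * (dl i k : ℝ) * ∑ ℓ ∈ Finset.Ico (k - dl i k) k, s ℓ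
          ≤ 2 * γ ^ 2 * (dl i k : ℝ) * ∑ ℓ ∈ Finset.Ico (k - 2 * n) k, s ℓ :=
            mul_le_mul_of_nonneg_left hsum1 hc0
        _ ≤ (γ / L) * ∑ ℓ ∈ Finset.Ico (k - 2 * n) k, s ℓ :=
            mul_le_mul_of_nonneg_right hcoef (le_trans hsum0 hsum1)
    have hterm2 : 2 * γ ^ 2 * (dl i k : ℝ) ^ 2 * σ2 / (B * n) ≤ 2 * γ * σ2 / (L * B) := by
      rw [div_le_div_iff₀ (by positivity) (by positivity)]
      have hdsq : (dl i k : ℝ) ^ 2 ≤ 4 * (n : ℝ) ^ 2 := by nlinarith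
      have hpos1 : (0:ℝ) ≤ 2 * γ * σ2 * B * n := by positivity
      have hmul := mul_le_mul_of_nonneg_right hγL hpos1
      have hpos2 : (0:ℝ) ≤ 2 * γ ^ 2 * σ2 * L * B := by positivity
      have hc2 := mul_le_mul_of_nonneg_left hdsq hpos2
      nlinarith [hmul, hc2]
    calc r i k ≤ _ := hr i k
      _ ≤ _ := add_le_add hterm1 hterm2
  -- sum everything
  set S := ∑ k ∈ Finset.range K, s k with hS
  have hsumbound : ∑ k ∈ Finset.range K, ∑ i : Fin n, r i k
      ≤ (n : ℝ) * ((γ / L) * ((2 * n : ℕ) * S) + (K : ℝ) * (2 * γ * σ2 / (L * B))) := by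
    have step1 : ∑ k ∈ Finset.range K, ∑ i : Fin n, r i k
        ≤ ∑ k ∈ Finset.range K, ∑ i : Fin n,
            ((γ / L) * ∑ ℓ ∈ Finset.Ico (k - 2 * n) k, s ℓ + 2 * γ * σ2 / (L * B)) :=
      Finset.sum_le_sum fun k _ => Finset.sum_le_sum fun i _ => key i k
    have step2 : ∑ k ∈ Finset.range K, ∑ i : Fin n,
            ((γ / L) * ∑ ℓ ∈ Finset.Ico (k - 2 * n) k, s ℓ + 2 * γ * σ2 / (L * B))
        = (n : ℝ) * ((γ / L) * (∑ k ∈ Finset.range K, ∑ ℓ ∈ Finset.Ico (k - 2 * n) k, s ℓ)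
            + (K : ℝ) * (2 * γ * σ2 / (L * B))) := by
      calc ∑ k ∈ Finset.range K, ∑ i : Fin n,
              ((γ / L) * ∑ ℓ ∈ Finset.Ico (k - 2 * n) k, s ℓ + 2 * γ * σ2 / (L * B))
          = ∑ k ∈ Finset.range K, (n : ℝ) *
              ((γ / L) * ∑ ℓ ∈ Finset.Ico (k - 2 * n) k, s ℓ + 2 * γ * σ2 / (L * B)) := by
            refine Finset.sum_congr rfl fun k _ => ?_
            simp [Finset.sum_const, Finset.card_univ, nsmul_eq_mul]
            ring
        _ = (n : ℝ) * ∑ k ∈ Finset.range K,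
              ((γ / L) * ∑ ℓ ∈ Finset.Ico (k - 2 * n) k, s ℓ + 2 * γ * σ2 / (L * B)) := by
            rw [Finset.mul_sum]
        _ = _ := by
            congr 1
            simp [Finset.sum_add_distrib, Finset.sum_const, Finset.card_range, Finset.mul_sum]
    have hcount := counting_aux K (2 * n) s hs
    have step3 : (n : ℝ) * ((γ / L) * (∑ k ∈ Finset.range K, ∑ ℓ ∈ Finset.Ico (k - 2 * n) k, s ℓ)
            + (K : ℝ) * (2 * γ * σ2 / (L * B)))
        ≤ (n : ℝ) * ((γ / L) * ((2 * n : ℕ) * S) + (K : ℝ) * (2 * γ * σ2 / (L * B))) := by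
      have : (γ / L) * (∑ k ∈ Finset.range K, ∑ ℓ ∈ Finset.Ico (k - 2 * n) k, s ℓ)
          ≤ (γ / L) * ((2 * n : ℕ) * S) :=
        mul_le_mul_of_nonneg_left hcount (by positivity)
      have := add_le_add_left this ((K : ℝ) * (2 * γ * σ2 / (L * B)))
      exact mul_le_mul_of_nonneg_left this hn0.le
    calc ∑ k ∈ Finset.range K, ∑ i : Fin n, r i k ≤ _ := step1
      _ = _ := step2
      _ ≤ _ := step3
  have hLHS : (1 / (K : ℝ)) * ∑ k ∈ Finset.range K, (1 / (n : ℝ)) * ∑ i : Fin n, r i k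
      = (1 / ((K : ℝ) * n)) * ∑ k ∈ Finset.range K, ∑ i : Fin n, r i k := by
    rw [← Finset.mul_sum]
    field_simp
  rw [hLHS]
  have hfinal : (1 / ((K : ℝ) * n)) *
      ((n : ℝ) * ((γ / L) * ((2 * n : ℕ) * S) + (K : ℝ) * (2 * γ * σ2 / (L * B))))
      = (2 * γ * n / (L * K)) * S + 2 * γ * σ2 / (L * B) := by
    push_cast
    field_simp
  calc (1 / ((K : ℝ) * n)) * ∑ k ∈ Finset.range K, ∑ i : Fin n, r i k
      ≤ (1 / ((K : ℝ) * n)) *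
        ((n : ℝ) * ((γ / L) * ((2 * n : ℕ) * S) + (K : ℝ) * (2 * γ * σ2 / (L * B)))) :=
        mul_le_mul_of_nonneg_left hsumbound (by positivity)
    _ = _ := hfinal
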